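/- arXiv:2012.03588 — 2 statements merged into one kernel-verified Lean document; each statement's English description precedes it below -/
import Mathlib

section
/- If a Borel probability measure π on [0,1] has first moment 1/2 and its even centralized moments satisfy ∫ (t - 1/2)^{2n} dπ(t) = ((2n)!/n!) · ℓ^n · p^{⟨n⟩} for all n ∈ ℕ, where ℓ, p > 0 and p^{⟨n⟩} = ∏_{i=0}^{n-1} p/(1+ip), then ℓ ≤ 1/16. -/
open MeasureTheory Filter

theorem pi_measure_ell_le_sixteenth (π : Measure ℝ) [IsProbabilityMeasure π]
    (hsupp : π (Set.Icc (0 : ℝ) 1)ᶜ = 0)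
    (hmean : ∫ t, t ∂π = 1 / 2) (ℓ p : ℝ) (hℓ : 0 < ℓ) (hp : 0 < p)
    (hmom : ∀ n : ℕ, 1 ≤ n →
      ∫ t, (t - 1 / 2) ^ (2 * n) ∂π
        = ((2 * n).factorial : ℝ) / (n.factorial : ℝ) * ℓ ^ n *
            ∏ i ∈ Finset.range n, p / (1 + i * p)) :
    ℓ ≤ 1 / 16 := by
  -- a.e. membership in [0,1]
  have hae : ∀ᵐ t ∂π, t ∈ Set.Icc (0 : ℝ) 1 := by
    rw [MeasureTheory.ae_iff]
    exact hsupp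
  -- moment upper bound
  have hbound : ∀ n : ℕ, ∫ t, (t - 1 / 2) ^ (2 * n) ∂π ≤ (1 / 4 : ℝ) ^ n := by
    intro n
    have h1 : ∫ t, (t - 1 / 2) ^ (2 * n) ∂π ≤ ∫ _t, ((1 / 4 : ℝ)) ^ n ∂π := by
      apply integral_mono_of_nonneg
      · filter_upwards with t
        have : (t - 1 / 2) ^ (2 * n) = ((t - 1 / 2) ^ 2) ^ n := by
          rw [← pow_mul]
        rw [this]; positivity
      · exact integrable_const _
      · filter_upwards [hae] with t ht
        have h2 : (t - 1 / 2) ^ 2 ≤ 1 / 4 := by nlinarith [ht.1, ht.2]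
        calc (t - 1 / 2) ^ (2 * n) = ((t - 1 / 2) ^ 2) ^ n := by rw [← pow_mul]
          _ ≤ (1 / 4 : ℝ) ^ n := by
              apply pow_le_pow_left₀ (sq_nonneg _) h2
    simpa using h1
  -- the terms
  set f : ℕ → ℝ := fun i => ((i : ℝ) + 1) * (p / (1 + (i : ℝ) * p)) with hf
  have hden : ∀ i : ℕ, (0 : ℝ) < 1 + (i : ℝ) * p := by
    intro i
    have : (0 : ℝ) ≤ (i : ℝ) * p := by positivity
    linarith
  have hfpos : ∀ i : ℕ, 0 < f i := by
    intro i
    have := hden i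
    simp only [hf]
    positivity
  -- rewrite of the moment
  have hA : ∀ n : ℕ, ((2 * n).factorial : ℝ) / (n.factorial : ℝ) *
      ∏ i ∈ Finset.range n, p / (1 + i * p)
      = ((2 * n).choose n : ℝ) * ∏ i ∈ Finset.range n, f i := by
    intro n
    have hfac : ((2 * n).factorial : ℝ)
        = ((2 * n).choose n : ℝ) * (n.factorial : ℝ) * (n.factorial : ℝ) := by
      have h := Nat.choose_mul_factorial_mul_factorial (show n ≤ 2 * n by omega)
      have h2 : 2 * n - n = n := by omega
      rw [h2] at h
      exact_mod_cast h.symm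
    have hprod : ∏ i ∈ Finset.range n, f i
        = (n.factorial : ℝ) * ∏ i ∈ Finset.range n, p / (1 + (i : ℝ) * p) := by
      rw [hf]
      rw [Finset.prod_mul_distrib]
      congr 1
      have h9 : (∏ x ∈ Finset.range n, ((x:ℝ) + 1))
          = ((∏ x ∈ Finset.range n, (x + 1) : ℕ) : ℝ) := by push_cast; rfl
      rw [h9, Finset.prod_range_add_one_eq_factorial]
    rw [hprod, hfac]
    have hnf : (0 : ℝ) < (n.factorial : ℝ) := by exact_mod_cast n.factorial_pos
    field_simp
  -- main argument by contradiction
  by_contra hcon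
  push_neg at hcon
  set ε : ℝ := (16 * ℓ - 1) / (32 * ℓ) with hε
  have hε0 : 0 < ε := by
    apply div_pos <;> linarith
  have h1ε : 1 - ε = (16 * ℓ + 1) / (32 * ℓ) := by
    rw [hε, eq_div_iff (by positivity), sub_mul, div_mul_cancel₀ _ (by positivity)]
    ring
  have h1ε0 : 0 < 1 - ε := by rw [h1ε]; positivity
  set q : ℝ := 16 * ℓ * (1 - ε) with hq
  have hq1 : 1 < q := by
    rw [hq, h1ε]
    rw [show 16 * ℓ * ((16 * ℓ + 1) / (32 * ℓ)) = (16 * ℓ + 1) / 2 by field_simp; ring]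
    rw [lt_div_iff₀ (by norm_num : (0:ℝ) < 2)]
    linarith
  -- threshold N
  set N : ℕ := ⌈1 / (ε * p)⌉₊ + 1 with hN
  have hNlb : 1 / (ε * p) ≤ (N : ℝ) := by
    rw [hN]
    push_cast
    have := Nat.le_ceil (1 / (ε * p))
    linarith
  have hN1 : 1 ≤ N := by omega
  have hflb : ∀ i : ℕ, N ≤ i → 1 - ε ≤ f i := by
    intro i hi
    have hiN : (N : ℝ) ≤ (i : ℝ) := by exact_mod_cast hi
    have hεp : 0 < ε * p := by positivity
    have h1 : 1 ≤ ε * (i : ℝ) * p := by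
      have : 1 / (ε * p) ≤ (i : ℝ) := le_trans hNlb hiN
      rw [div_le_iff₀ hεp] at this
      nlinarith
    have hd := hden i
    have h2 : 1 - ε ≤ ((i:ℝ) + 1) * p / (1 + (i:ℝ) * p) := by
      rw [le_div_iff₀ hd]
      nlinarith
    simpa [hf, mul_div_assoc] using h2
  set K0 : ℝ := ∏ i ∈ Finset.range N, f i with hK0
  have hK0pos : 0 < K0 := Finset.prod_pos fun i _ => hfpos i
  set D : ℝ := (1 - ε) ^ N / K0 with hD
  have hDpos : 0 < D := by positivity
  -- key inequality: q ^ n ≤ D * (2 * n) for n ≥ N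
  have hkey : ∀ n : ℕ, N ≤ n → q ^ n ≤ D * (2 * n) := by
    intro n hn
    have hn1 : 1 ≤ n := le_trans hN1 hn
    -- moment identity + bound
    have h1 : ((2 * n).choose n : ℝ) * (∏ i ∈ Finset.range n, f i) * ℓ ^ n
        ≤ (1 / 4 : ℝ) ^ n := by
      have := hmom n hn1
      rw [this] at *
      have hb := hbound n
      rw [hmom n hn1] at hb
      calc ((2 * n).choose n : ℝ) * (∏ i ∈ Finset.range n, f i) * ℓ ^ n
          = ((2 * n).factorial : ℝ) / (n.factorial : ℝ) * ℓ ^ n *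
            ∏ i ∈ Finset.range n, p / (1 + i * p) := by rw [← hA n]; ring
        _ ≤ (1 / 4 : ℝ) ^ n := hb
    -- lower bound on the product
    have h2 : K0 * (1 - ε) ^ (n - N) ≤ ∏ i ∈ Finset.range n, f i := by
      have hnn : n = N + (n - N) := by omega
      have hsplit : ∏ i ∈ Finset.range n, f i
          = (∏ i ∈ Finset.range N, f i) * ∏ i ∈ Finset.range (n - N), f (N + i) := by
        conv_lhs => rw [hnn, Finset.prod_range_add]
      rw [hsplit, ← hK0]
      apply mul_le_mul_of_nonneg_left _ hK0pos.le
      calc (1 - ε) ^ (n - N) = ∏ _i ∈ Finset.range (n - N), (1 - ε) := by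
            rw [Finset.prod_const, Finset.card_range]
        _ ≤ ∏ i ∈ Finset.range (n - N), f (N + i) := by
            apply Finset.prod_le_prod
            · intro i _; linarith
            · intro i _; exact hflb _ (by omega)
    -- lower bound on central binomial
    have h3 : (4 : ℝ) ^ n ≤ (2 * n : ℕ) * ((2 * n).choose n : ℝ) := by
      have := Nat.four_pow_le_two_mul_self_mul_centralBinom n hn1
      rw [Nat.centralBinom] at this
      exact_mod_cast this
    -- combine
    have hchoosepos : (0 : ℝ) < ((2 * n).choose n : ℝ) := by
      exact_mod_cast Nat.choose_pos (show n ≤ 2 * n by omega)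
    have hprodpos : (0 : ℝ) < ∏ i ∈ Finset.range n, f i :=
      Finset.prod_pos fun i _ => hfpos i
    have h4 : ((2 * n).choose n : ℝ) * (K0 * (1 - ε) ^ (n - N)) * ℓ ^ n
        ≤ (1 / 4 : ℝ) ^ n := by
      refine le_trans ?_ h1
      apply mul_le_mul_of_nonneg_right _ (by positivity)
      exact mul_le_mul_of_nonneg_left h2 hchoosepos.le
    -- multiply by 4^n and use h3
    have h5 : (4 : ℝ) ^ n * (K0 * (1 - ε) ^ (n - N)) * ℓ ^ n
        ≤ (2 * n : ℕ) * (((2 * n).choose n : ℝ) * (K0 * (1 - ε) ^ (n - N)) * ℓ ^ n) := by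
      have hpos : (0 : ℝ) ≤ (K0 * (1 - ε) ^ (n - N)) * ℓ ^ n := by positivity
      calc (4 : ℝ) ^ n * (K0 * (1 - ε) ^ (n - N)) * ℓ ^ n
          = (4 : ℝ) ^ n * ((K0 * (1 - ε) ^ (n - N)) * ℓ ^ n) := by ring
        _ ≤ ((2 * n : ℕ) * ((2 * n).choose n : ℝ)) * ((K0 * (1 - ε) ^ (n - N)) * ℓ ^ n) :=
            mul_le_mul_of_nonneg_right h3 hpos
        _ = (2 * n : ℕ) * (((2 * n).choose n : ℝ) * (K0 * (1 - ε) ^ (n - N)) * ℓ ^ n) := by ring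
    have h6 : (4 : ℝ) ^ n * (K0 * (1 - ε) ^ (n - N)) * ℓ ^ n
        ≤ (2 * n : ℕ) * (1 / 4 : ℝ) ^ n := by
      refine le_trans h5 ?_
      apply mul_le_mul_of_nonneg_left h4 (by positivity)
    -- now massage into q ^ n ≤ D * (2 * n)
    have hεsplit : (1 - ε) ^ n = (1 - ε) ^ (n - N) * (1 - ε) ^ N := by
      rw [← pow_add]
      congr 1
      omega
    have hq16 : q ^ n = 16 ^ n * ℓ ^ n * (1 - ε) ^ n := by
      rw [hq, mul_pow, mul_pow]
    rw [hq16, hεsplit]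
    have h7 : (16 : ℝ) ^ n * ℓ ^ n * ((1 - ε) ^ (n - N) * (1 - ε) ^ N) * K0
        ≤ (2 * n : ℕ) * (1 - ε) ^ N := by
      have := mul_le_mul_of_nonneg_right h6 (show (0:ℝ) ≤ 4 ^ n * (1 - ε) ^ N by positivity)
      calc (16 : ℝ) ^ n * ℓ ^ n * ((1 - ε) ^ (n - N) * (1 - ε) ^ N) * K0
          = ((4 : ℝ) ^ n * (K0 * (1 - ε) ^ (n - N)) * ℓ ^ n) * (4 ^ n * (1 - ε) ^ N) := by
            rw [show (16 : ℝ) ^ n = 4 ^ n * 4 ^ n by rw [← mul_pow]; norm_num]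
            ring
        _ ≤ ((2 * n : ℕ) * (1 / 4 : ℝ) ^ n) * (4 ^ n * (1 - ε) ^ N) := this
        _ = (2 * n : ℕ) * (1 - ε) ^ N * ((1 / 4 : ℝ) ^ n * 4 ^ n) := by ring
        _ = (2 * n : ℕ) * (1 - ε) ^ N := by
            rw [← mul_pow]
            norm_num
    rw [hD]
    rw [div_mul_eq_mul_div, le_div_iff₀ hK0pos]
    calc (16 : ℝ) ^ n * ℓ ^ n * ((1 - ε) ^ (n - N) * (1 - ε) ^ N) * K0
        ≤ (2 * n : ℕ) * (1 - ε) ^ N := h7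
      _ = (1 - ε) ^ N * (2 * (n : ℝ)) := by push_cast; ring
  -- contradiction via growth of q ^ n
  have hlim : Tendsto (fun n : ℕ => D * (2 * (n : ℝ)) / q ^ n) atTop (nhds 0) := by
    have h0 : Tendsto (fun n : ℕ => (n : ℝ) ^ 1 / q ^ n) atTop (nhds 0) :=
      tendsto_pow_const_div_const_pow_of_one_lt 1 hq1
    have h1 : Tendsto (fun n : ℕ => (2 * D) * ((n : ℝ) ^ 1 / q ^ n)) atTop (nhds ((2 * D) * 0)) :=
      h0.const_mul _
    rw [mul_zero] at h1
    refine h1.congr fun n => ?_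
    rw [pow_one]
    ring
  have hev : ∀ᶠ n : ℕ in atTop, D * (2 * (n : ℝ)) / q ^ n < 1 :=
    hlim.eventually (eventually_lt_nhds zero_lt_one)
  obtain ⟨M, hM⟩ := hev.exists_forall_of_atTop
  set n := max N M with hn
  have hqn : 0 < q ^ n := by positivity
  have hlt := hM n (le_max_right _ _)
  have hkeyn := hkey n (le_max_left _ _)
  rw [div_lt_one hqn] at hlt
  have : q ^ n < q ^ n := lt_of_le_of_lt hkeyn hlt
  exact lt_irrefl _ this
end

section
/- Let f, g : I → ℝ be n-times continuously differentiable on an open interval I with f'g - fg' nowhere zero, and define Φ = W^{2,0}/W^{1,0} and Ψ = -W^{2,1}/W^{1,0}, where W^{i,j} = f^{(i)}g^{(j)} - f^{(j)}g^{(i)}. Define sequences φ_i, ψ_i by φ_0 = 0, ψ_0 = 1, φ_{i+1} = φ_i' + φ_i Φ + ψ_i, ψ_{i+1} = φ_i Ψ + ψ_i'. Then for all i, j ∈ {0,…,n}: W^{i,j} = (φ_i ψ_j - φ_j ψ_i) · W^{1,0}. -/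
/-- The pair of sequences `(φ_i, ψ_i)` defined by the recursion
`φ_0 = 0`, `ψ_0 = 1`, `φ_{i+1} = φ_i' + φ_i Φ + ψ_i`, `ψ_{i+1} = φ_i Ψ + ψ_i'`. -/
noncomputable def phipsi (Φ Ψ : ℝ → ℝ) : ℕ → (ℝ → ℝ) × (ℝ → ℝ)
  | 0 => (fun _ => 0, fun _ => 1)
  | i + 1 =>
      (fun x => deriv (phipsi Φ Ψ i).1 x + (phipsi Φ Ψ i).1 x * Φ x + (phipsi Φ Ψ i).2 x,
       fun x => (phipsi Φ Ψ i).1 x * Ψ x + deriv (phipsi Φ Ψ i).2 x)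

lemma contDiff_iteratedDeriv_aux :
    ∀ (k n : ℕ) (f : ℝ → ℝ), k ≤ n → ContDiff ℝ n f →
      ContDiff ℝ ((n - k : ℕ)) (iteratedDeriv k f)
  | 0, n, f, _, hf => by simpa using hf
  | (k+1), n, f, hk, hf => by
    obtain ⟨m, rfl⟩ : ∃ m, n = m + 1 := ⟨n - 1, by omega⟩
    have hf' : ContDiff ℝ ((m : WithTop ℕ∞) + 1) f := by exact_mod_cast hf
    have hd : ContDiff ℝ (m : ℕ) (deriv f) := (contDiff_succ_iff_deriv.mp hf').2.2
    rw [iteratedDeriv_succ']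
    have := contDiff_iteratedDeriv_aux k m (deriv f) (by omega) hd
    simpa [Nat.succ_sub_succ] using this

lemma phipsi_one (Φ Ψ : ℝ → ℝ) :
    (phipsi Φ Ψ 1).1 = (fun _ => 1) ∧ (phipsi Φ Ψ 1).2 = (fun _ => 0) := by
  constructor <;> funext x <;> simp [phipsi]

lemma key (n : ℕ) (hn : 2 ≤ n) (f g Φ Ψ : ℝ → ℝ) (I : Set ℝ) (hIo : IsOpen I)
    (hf : ContDiff ℝ n f) (hg : ContDiff ℝ n g)
    (hΦ : ContDiffOn ℝ ((n - 2 : ℕ)) Φ I) (hΨ : ContDiffOn ℝ ((n - 2 : ℕ)) Ψ I)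
    (hf2 : ∀ x ∈ I, iteratedDeriv 2 f x = Φ x * deriv f x + Ψ x * f x)
    (hg2 : ∀ x ∈ I, iteratedDeriv 2 g x = Φ x * deriv g x + Ψ x * g x) :
    ∀ i ≤ n, ContDiffOn ℝ ((n - i : ℕ)) (phipsi Φ Ψ i).1 I ∧
      ContDiffOn ℝ ((n - i : ℕ)) (phipsi Φ Ψ i).2 I ∧
      (∀ x ∈ I, iteratedDeriv i f x
        = (phipsi Φ Ψ i).1 x * deriv f x + (phipsi Φ Ψ i).2 x * f x) ∧
      (∀ x ∈ I, iteratedDeriv i g x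
        = (phipsi Φ Ψ i).1 x * deriv g x + (phipsi Φ Ψ i).2 x * g x) := by
  -- generic pointwise step, valid once differentiability is known
  have step : ∀ (h : ℝ → ℝ), ContDiff ℝ n h →
      (∀ x ∈ I, iteratedDeriv 2 h x = Φ x * deriv h x + Ψ x * h x) →
      ∀ i : ℕ, DifferentiableOn ℝ (phipsi Φ Ψ i).1 I → DifferentiableOn ℝ (phipsi Φ Ψ i).2 I →
      (∀ x ∈ I, iteratedDeriv i h x
        = (phipsi Φ Ψ i).1 x * deriv h x + (phipsi Φ Ψ i).2 x * h x) →
      ∀ x ∈ I, iteratedDeriv (i+1) h x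
        = (phipsi Φ Ψ (i+1)).1 x * deriv h x + (phipsi Φ Ψ (i+1)).2 x * h x := by
    intro h hh hh2 i hφd hψd hih x hx
    have hmem : I ∈ nhds x := hIo.mem_nhds hx
    have hh' : ContDiff ℝ ((1 : WithTop ℕ∞) + 1) h :=
      hh.of_le (by exact_mod_cast (by exact_mod_cast Nat.cast_le.mpr hn : ((2:ℕ) : WithTop ℕ∞) ≤ (n : WithTop ℕ∞)))
    have hd1 : Differentiable ℝ h := hh'.differentiable (by norm_num)
    have hd2 : Differentiable ℝ (deriv h) :=
      (contDiff_succ_iff_deriv.mp hh').2.2.differentiable one_ne_zero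
    have hφx : DifferentiableAt ℝ (phipsi Φ Ψ i).1 x := (hφd x hx).differentiableAt hmem
    have hψx : DifferentiableAt ℝ (phipsi Φ Ψ i).2 x := (hψd x hx).differentiableAt hmem
    have hee : iteratedDeriv i h =ᶠ[nhds x]
        fun y => (phipsi Φ Ψ i).1 y * deriv h y + (phipsi Φ Ψ i).2 y * h y :=
      Filter.eventually_of_mem hmem hih
    have : deriv (iteratedDeriv i h) x
        = deriv (fun y => (phipsi Φ Ψ i).1 y * deriv h y + (phipsi Φ Ψ i).2 y * h y) x :=
      hee.deriv_eq
    rw [iteratedDeriv_succ, this,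
      deriv_fun_add (f := fun y => (phipsi Φ Ψ i).1 y * deriv h y)
        (g := fun y => (phipsi Φ Ψ i).2 y * h y) (hφx.mul (hd2 x)) (hψx.mul (hd1 x)),
      deriv_fun_mul hφx (hd2 x), deriv_fun_mul hψx (hd1 x)]
    have h2 : deriv (deriv h) x = Φ x * deriv h x + Ψ x * h x := by
      have := hh2 x hx
      rwa [iteratedDeriv_succ, iteratedDeriv_one] at this
    show _ = (deriv (phipsi Φ Ψ i).1 x + (phipsi Φ Ψ i).1 x * Φ x + (phipsi Φ Ψ i).2 x) * deriv h x
        + ((phipsi Φ Ψ i).1 x * Ψ x + deriv (phipsi Φ Ψ i).2 x) * h x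
    rw [h2]; ring
  intro i
  induction i with
  | zero =>
    intro _
    refine ⟨contDiffOn_const, contDiffOn_const, ?_, ?_⟩ <;>
      · intro x hx; show iteratedDeriv 0 _ x = 0 * _ + 1 * _; rw [iteratedDeriv_zero]; ring
  | succ i ih =>
    intro hi1
    have hi : i ≤ n := by omega
    obtain ⟨hφ, hψ, hhf, hhg⟩ := ih hi
    have hge1 : (1 : WithTop ℕ∞) ≤ ((n - i : ℕ) : WithTop ℕ∞) := by
      exact_mod_cast Nat.one_le_cast.mpr (by omega : 1 ≤ n - i)
    have hφd : DifferentiableOn ℝ (phipsi Φ Ψ i).1 I := hφ.differentiableOn (zero_lt_one.trans_le hge1).ne'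
    have hψd : DifferentiableOn ℝ (phipsi Φ Ψ i).2 I := hψ.differentiableOn (zero_lt_one.trans_le hge1).ne'
    refine ⟨?_, ?_, step f hf hf2 i hφd hψd hhf, step g hg hg2 i hφd hψd hhg⟩
    · -- smoothness of φ_{i+1}
      rcases Nat.eq_zero_or_pos i with hi0 | hipos
      · subst hi0; rw [(phipsi_one Φ Ψ).1]; exact contDiffOn_const
      · have e0 : (n - (i+1)) + 1 ≤ n - i := by omega
        have e1 : n - (i+1) ≤ n - i := by omega
        have e2 : n - (i+1) ≤ n - 2 := by omega
        have hd : ContDiffOn ℝ ((n - (i+1) : ℕ)) (deriv (phipsi Φ Ψ i).1) I :=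
          hφ.deriv_of_isOpen hIo (by exact_mod_cast Nat.cast_le.mpr e0)
        have hle1 : ((n - (i+1) : ℕ) : WithTop ℕ∞) ≤ ((n - i : ℕ) : WithTop ℕ∞) :=
          Nat.cast_le.mpr e1
        have hle2 : ((n - (i+1) : ℕ) : WithTop ℕ∞) ≤ ((n - 2 : ℕ) : WithTop ℕ∞) :=
          Nat.cast_le.mpr e2
        simp only [phipsi]
        exact (hd.add ((hφ.of_le hle1).mul (hΦ.of_le hle2))).add (hψ.of_le hle1)
    · rcases Nat.eq_zero_or_pos i with hi0 | hipos
      · subst hi0; rw [(phipsi_one Φ Ψ).2]; exact contDiffOn_const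
      · have e0 : (n - (i+1)) + 1 ≤ n - i := by omega
        have e1 : n - (i+1) ≤ n - i := by omega
        have e2 : n - (i+1) ≤ n - 2 := by omega
        have hd : ContDiffOn ℝ ((n - (i+1) : ℕ)) (deriv (phipsi Φ Ψ i).2) I :=
          hψ.deriv_of_isOpen hIo (by exact_mod_cast Nat.cast_le.mpr e0)
        have hle1 : ((n - (i+1) : ℕ) : WithTop ℕ∞) ≤ ((n - i : ℕ) : WithTop ℕ∞) :=
          Nat.cast_le.mpr e1
        have hle2 : ((n - (i+1) : ℕ) : WithTop ℕ∞) ≤ ((n - 2 : ℕ) : WithTop ℕ∞) :=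
          Nat.cast_le.mpr e2
        simp only [phipsi]
        exact ((hφ.of_le hle1).mul (hΨ.of_le hle2)).add hd

theorem wronskian_formula (n : ℕ) (hn : 2 ≤ n) (f g : ℝ → ℝ)
    (hf : ContDiff ℝ n f) (hg : ContDiff ℝ n g)
    (a b : ℝ) (I : Set ℝ) (hI : I = Set.Ioo a b)
    (W : ℕ → ℕ → ℝ → ℝ)
    (hW : ∀ i j x, W i j x =
      iteratedDeriv i f x * iteratedDeriv j g x - iteratedDeriv j f x * iteratedDeriv i g x)
    (hW10 : ∀ x ∈ I, W 1 0 x ≠ 0)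
    (Φ Ψ : ℝ → ℝ)
    (hΦ : ∀ x ∈ I, Φ x = W 2 0 x / W 1 0 x)
    (hΨ : ∀ x ∈ I, Ψ x = - (W 2 1 x / W 1 0 x)) :
    ∀ i ≤ n, ∀ j ≤ n, ∀ x ∈ I,
      W i j x = ((phipsi Φ Ψ i).1 x * (phipsi Φ Ψ j).2 x
          - (phipsi Φ Ψ j).1 x * (phipsi Φ Ψ i).2 x) * W 1 0 x := by
  subst hI
  set I := Set.Ioo a b with hIdef
  have hIo : IsOpen I := isOpen_Ioo
  have w10 : ∀ x, W 1 0 x = deriv f x * g x - f x * deriv g x := by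
    intro x; rw [hW]; simp
  have hne : ∀ x ∈ I, deriv f x * g x - f x * deriv g x ≠ 0 := by
    intro x hx; have := hW10 x hx; rwa [w10] at this
  have hF2 : ContDiff ℝ ((n - 2 : ℕ)) (iteratedDeriv 2 f) :=
    contDiff_iteratedDeriv_aux 2 n f hn hf
  have hG2 : ContDiff ℝ ((n - 2 : ℕ)) (iteratedDeriv 2 g) :=
    contDiff_iteratedDeriv_aux 2 n g hn hg
  have hF1 : ContDiff ℝ ((n - 1 : ℕ)) (deriv f) := by
    simpa [iteratedDeriv_one] using contDiff_iteratedDeriv_aux 1 n f (by omega) hf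
  have hG1 : ContDiff ℝ ((n - 1 : ℕ)) (deriv g) := by
    simpa [iteratedDeriv_one] using contDiff_iteratedDeriv_aux 1 n g (by omega) hg
  have hle1 : ((n - 2 : ℕ) : WithTop ℕ∞) ≤ ((n - 1 : ℕ) : WithTop ℕ∞) :=
    Nat.cast_le.mpr (by omega)
  have hle2 : ((n - 2 : ℕ) : WithTop ℕ∞) ≤ (n : WithTop ℕ∞) := Nat.cast_le.mpr (by omega)
  have hf' : ContDiff ℝ ((n - 2 : ℕ)) f := hf.of_le hle2
  have hg' : ContDiff ℝ ((n - 2 : ℕ)) g := hg.of_le hle2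
  have hden : ContDiffOn ℝ ((n - 2 : ℕ)) (fun x => deriv f x * g x - f x * deriv g x) I :=
    (((hF1.of_le hle1).mul hg').sub (hf'.mul (hG1.of_le hle1))).contDiffOn
  have hΦ' : ContDiffOn ℝ ((n - 2 : ℕ)) Φ I := by
    refine ContDiffOn.congr (ContDiffOn.div
      (((hF2.mul hg').sub (hf'.mul hG2)).contDiffOn) hden hne) ?_
    intro x hx
    rw [hΦ x hx, hW 2 0 x, w10 x]
    simp
  have hΨ' : ContDiffOn ℝ ((n - 2 : ℕ)) Ψ I := by
    refine ContDiffOn.congr (ContDiffOn.neg (ContDiffOn.div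
      (((hF2.mul (hG1.of_le hle1)).sub ((hF1.of_le hle1).mul hG2)).contDiffOn) hden hne)) ?_
    intro x hx
    rw [hΨ x hx, hW 2 1 x, w10 x]
    simp [iteratedDeriv_one]
  have hf2 : ∀ x ∈ I, iteratedDeriv 2 f x = Φ x * deriv f x + Ψ x * f x := by
    intro x hx
    rw [hΦ x hx, hΨ x hx, hW 2 0 x, hW 2 1 x, w10 x]
    simp only [iteratedDeriv_one, iteratedDeriv_zero]
    rw [div_mul_eq_mul_div, neg_mul, div_mul_eq_mul_div, ← sub_eq_add_neg, ← sub_div,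
      eq_div_iff (hne x hx)]
    ring
  have hg2 : ∀ x ∈ I, iteratedDeriv 2 g x = Φ x * deriv g x + Ψ x * g x := by
    intro x hx
    rw [hΦ x hx, hΨ x hx, hW 2 0 x, hW 2 1 x, w10 x]
    simp only [iteratedDeriv_one, iteratedDeriv_zero]
    rw [div_mul_eq_mul_div, neg_mul, div_mul_eq_mul_div, ← sub_eq_add_neg, ← sub_div,
      eq_div_iff (hne x hx)]
    ring
  have K := key n hn f g Φ Ψ I hIo hf hg hΦ' hΨ' hf2 hg2
  intro i hi j hj x hx
  obtain ⟨-, -, hfi, hgi⟩ := K i hi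
  obtain ⟨-, -, hfj, hgj⟩ := K j hj
  rw [hW i j x, hfi x hx, hgi x hx, hfj x hx, hgj x hx, w10 x]
  ring
end
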